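/- For the complete bipartite graph K_{m,n} with m, n ≥ 1, the total transitivity satisfies Tr_t(K_{m,n}) = min{m, n}. -/
import Mathlib


/-- A total transitive partition of `G` into `k` parts: the parts are nonempty, they
partition the vertex set, and `V_i` dominates `V_j` for all `i ≤ j`. -/
def TTPartition {V : Type*} (G : SimpleGraph V) (k : ℕ) (P : Fin k → Set V) : Prop :=
  (∀ i, (P i).Nonempty) ∧
  (∀ v : V, ∃! i, v ∈ P i) ∧
  (∀ i j : Fin k, i ≤ j → ∀ v ∈ P j, ∃ u ∈ P i, G.Adj u v)

/-- The total transitivity of the complete bipartite graph `K_{m,n}` (for `m, n ≥ 1`)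
equals `min m n`. -/
def fAux (m n k : ℕ) (hk : 0 < k) (hkm : k ≤ m) (hkn : k ≤ n) :
    Fin m ⊕ Fin n → Fin k
  | .inl a => ⟨min a.val (k - 1), by omega⟩
  | .inr b => ⟨min b.val (k - 1), by omega⟩

theorem stmt4 (m n : ℕ) (hm : 1 ≤ m) (hn : 1 ≤ n) :
    IsGreatest {k : ℕ | ∃ P : Fin k → Set (Fin m ⊕ Fin n),
      TTPartition (completeBipartiteGraph (Fin m) (Fin n)) k P} (min m n) := by
  constructor
  · -- membership: construct a partition of size min m n
    have hk : 1 ≤ min m n := le_min hm hn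
    set k := min m n with hkdef
    refine ⟨fun i => {v | fAux m n k hk (min_le_left m n) (min_le_right m n) v = i},
      ?_, ?_, ?_⟩
    · intro i
      refine ⟨Sum.inl ⟨i.val, lt_of_lt_of_le i.isLt (by omega)⟩, ?_⟩
      show fAux m n k hk (min_le_left m n) (min_le_right m n) _ = i
      apply Fin.ext
      show min i.val (k - 1) = i.val
      have := i.isLt
      omega
    · intro v
      exact ⟨fAux m n k hk (min_le_left m n) (min_le_right m n) v, rfl, fun j h => h.symm⟩
    · intro i j _ v hv
      cases v with
      | inl a =>
        refine ⟨Sum.inr ⟨i.val, lt_of_lt_of_le i.isLt (by omega)⟩, ?_, ?_⟩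
        · show fAux m n k hk (min_le_left m n) (min_le_right m n) _ = i
          apply Fin.ext
          show min i.val (k - 1) = i.val
          have := i.isLt
          omega
        · simp [completeBipartiteGraph]
      | inr b =>
        refine ⟨Sum.inl ⟨i.val, lt_of_lt_of_le i.isLt (by omega)⟩, ?_, ?_⟩
        · show fAux m n k hk (min_le_left m n) (min_le_right m n) _ = i
          apply Fin.ext
          show min i.val (k - 1) = i.val
          have := i.isLt
          omega
        · simp [completeBipartiteGraph]
  · -- upper bound
    rintro k ⟨P, hne, huniq, hdom⟩
    -- each part contains a left and right vertex
    have key : ∀ i : Fin k, (∃ a : Fin m, Sum.inl a ∈ P i) ∧ (∃ b : Fin n, Sum.inr b ∈ P i) := by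
      intro i
      obtain ⟨v, hv⟩ := hne i
      obtain ⟨u, hu, hadj⟩ := hdom i i le_rfl v hv
      cases u with
      | inl a =>
        cases v with
        | inl a' => simp [completeBipartiteGraph] at hadj
        | inr b => exact ⟨⟨a, hu⟩, ⟨b, hv⟩⟩
      | inr b =>
        cases v with
        | inl a => exact ⟨⟨a, hv⟩, ⟨b, hu⟩⟩
        | inr b' => simp [completeBipartiteGraph] at hadj
    -- build injections to Fin m and Fin n
    have hm' : k ≤ m := by
      have : Function.Injective (fun i : Fin k => ((key i).1.choose)) := by
        intro i j hij
        replace hij : (key i).1.choose = (key j).1.choose := hij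
        have h1 := (key i).1.choose_spec
        have h2 := (key j).1.choose_spec
        rw [hij] at h1
        obtain ⟨_, _, hu⟩ := huniq (Sum.inl (key j).1.choose)
        exact (hu i h1).trans (hu j h2).symm
      simpa using Fintype.card_le_of_injective _ this
    have hn' : k ≤ n := by
      have : Function.Injective (fun i : Fin k => ((key i).2.choose)) := by
        intro i j hij
        replace hij : (key i).2.choose = (key j).2.choose := hij
        have h1 := (key i).2.choose_spec
        have h2 := (key j).2.choose_spec
        rw [hij] at h1
        obtain ⟨_, _, hu⟩ := huniq (Sum.inr (key j).2.choose)
        exact (hu i h1).trans (hu j h2).symm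
      simpa using Fintype.card_le_of_injective _ this
    exact le_min hm' hn'
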